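/- arXiv:2010.08368 — 2 statements merged into one kernel-verified Lean document; each statement's English description precedes it below -/
import Mathlib

section
/- The graph L(K₆) × K₂, the bipartite double cover of the line graph of the complete graph on 6 vertices, is connected and total 8-uniform, i.e., γ_t(L(K₆) × K₂) = γ_gr^t(L(K₆) × K₂) = 8. -/
open SimpleGraph

/-- `A ⊆ V(G)` is a total dominating set of `G`: every vertex has a neighbor in `A`. -/
def TotalDomSet {V : Type*} (G : SimpleGraph V) (A : Set V) : Prop :=
  ∀ v : V, ∃ a ∈ A, G.Adj v a

/-- `s` is a legal (open neighborhood) sequence of `G`: the vertices are distinct and every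
vertex after the first has a neighbor adjacent to no vertex preceding it in the sequence. -/
def LegalSeq {V : Type*} (G : SimpleGraph V) (s : List V) : Prop :=
  s.Nodup ∧ ∀ (i : ℕ) (h : i < s.length), 0 < i →
    ∃ w : V, G.Adj (s.get ⟨i, h⟩) w ∧ ∀ u ∈ s.take i, ¬ G.Adj u w

/-- `s` is a total dominating sequence of `G`: a legal sequence whose underlying set is a
total dominating set. -/
def TotalDomSeq {V : Type*} (G : SimpleGraph V) (s : List V) : Prop :=
  LegalSeq G s ∧ TotalDomSet G {v | v ∈ s}

/-- The total domination number `γ_t(G)`: the minimum size of a total dominating set. -/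
noncomputable def totalDomNum {V : Type*} (G : SimpleGraph V) : ℕ :=
  sInf {n | ∃ A : Set V, TotalDomSet G A ∧ A.ncard = n}

/-- The Grundy total domination number `γ_gr^t(G)`: the maximum length of a total dominating
sequence. -/
noncomputable def grundyTotalDomNum {V : Type*} (G : SimpleGraph V) : ℕ :=
  sSup {n | ∃ s : List V, TotalDomSeq G s ∧ s.length = n}

/-- `G` is total `k`-uniform if `γ_t(G) = γ_gr^t(G) = k`. -/
def TotalKUniform {V : Type*} (G : SimpleGraph V) (k : ℕ) : Prop :=
  totalDomNum G = k ∧ grundyTotalDomNum G = k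

/-- `G` has no isolated vertices. -/
def NoIsolatedVerts {V : Type*} (G : SimpleGraph V) : Prop :=
  ∀ v : V, ∃ w : V, G.Adj v w

/-- The closed neighborhood `N[v] = N(v) ∪ {v}`. -/
def closedNbhd {V : Type*} (G : SimpleGraph V) (v : V) : Set V :=
  insert v (G.neighborSet v)

/-- `G` is false twin-free: no two distinct vertices have the same (open) neighborhood. -/
def FalseTwinFree {V : Type*} (G : SimpleGraph V) : Prop :=
  ∀ u v : V, u ≠ v → G.neighborSet u ≠ G.neighborSet v

/-- The line graph `L(Kₙ)` of the complete graph `Kₙ`: vertices are the 2-element subsets of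
`{1, …, n}`, two of them being adjacent iff they are distinct and intersect. -/
def lineK (n : ℕ) : SimpleGraph {s : Finset (Fin n) // s.card = 2} where
  Adj a b := a ≠ b ∧ (a.1 ∩ b.1).Nonempty
  symm := ⟨fun a b h => ⟨h.1.symm, by rw [Finset.inter_comm]; exact h.2⟩⟩
  loopless := ⟨fun a h => h.1 rfl⟩

/-- The direct (tensor) product of graphs: `(g,h)` is adjacent to `(g',h')` iff
`gg' ∈ E(G)` and `hh' ∈ E(H)`. In particular `directProd G (⊤ : SimpleGraph (Fin 2))` is the
bipartite double cover `G × K₂` of `G`. -/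
def directProd {V W : Type*} (G : SimpleGraph V) (H : SimpleGraph W) :
    SimpleGraph (V × W) where
  Adj a b := G.Adj a.1 b.1 ∧ H.Adj a.2 b.2
  symm := ⟨fun a b h => ⟨h.1.symm, h.2.symm⟩⟩
  loopless := ⟨fun a h => G.ne_of_adj h.1 rfl⟩

namespace Stmt12Aux

abbrev VV := {s : Finset (Fin 6) // s.card = 2}
abbrev GG := directProd (lineK 6) (⊤ : SimpleGraph (Fin 2))
abbrev VV' := VV × Fin 2

instance : DecidableRel (lineK 6).Adj := fun a b =>
  inferInstanceAs (Decidable (a ≠ b ∧ (a.1 ∩ b.1).Nonempty))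
instance : DecidableRel GG.Adj := fun a b =>
  inferInstanceAs (Decidable ((lineK 6).Adj a.1 b.1 ∧ (⊤ : SimpleGraph (Fin 2)).Adj a.2 b.2))

def rows (v : VV') : VV' → ZMod 2 := fun x => if GG.Adj v x then 1 else 0

def b4 : Fin 4 → VV :=
  ![⟨{0,1}, by decide⟩, ⟨{0,2}, by decide⟩, ⟨{0,3}, by decide⟩, ⟨{0,4}, by decide⟩]

def Bfun : Fin 8 → VV' :=
  ![(b4 0, 0), (b4 1, 0), (b4 2, 0), (b4 3, 0), (b4 0, 1), (b4 1, 1), (b4 2, 1), (b4 3, 1)]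

def Bvec : Fin 8 → (VV' → ZMod 2) := fun i => rows (Bfun i)

def cfun (v : VV') (i : Fin 8) : ZMod 2 :=
  if v.2 = (![0,0,0,0,1,1,1,1] : Fin 8 → Fin 2) i then
    (if (![1,2,3,4,1,2,3,4] : Fin 8 → Fin 6) i ∈ v.1.1 then 1 else 0) +
    (if (5 : Fin 6) ∈ v.1.1 then 1 else 0)
  else 0

set_option maxHeartbeats 4000000 in
theorem key : ∀ v x : VV', rows v x = ∑ i : Fin 8, cfun v i * Bvec i x := by decide

abbrev W : Submodule (ZMod 2) (VV' → ZMod 2) := Submodule.span (ZMod 2) (Set.range Bvec)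

theorem rows_mem (v : VV') : rows v ∈ W := by
  have h : rows v = ∑ i : Fin 8, cfun v i • Bvec i := by
    funext x
    rw [key v x]
    simp [Finset.sum_apply]
  rw [h]
  exact Submodule.sum_mem _ fun i _ => Submodule.smul_mem _ _ (Submodule.subset_span ⟨i, rfl⟩)

theorem noIso : ∀ v : VV', ∃ w : VV', GG.Adj v w := by decide

set_option maxHeartbeats 8000000 in
theorem noTDS3 : ∀ a b c : VV, ∃ v : VV,
    ¬(lineK 6).Adj v a ∧ ¬(lineK 6).Adj v b ∧ ¬(lineK 6).Adj v c := by decide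

theorem legal_le_8 (s : List VV') (hs : LegalSeq GG s) : s.length ≤ 8 := by
  obtain ⟨hnd, hleg⟩ := hs
  have hex : ∀ i : Fin s.length, ∃ w : VV',
      GG.Adj (s.get i) w ∧ ∀ j : Fin s.length, j < i → ¬ GG.Adj (s.get j) w := by
    intro i
    rcases Nat.eq_zero_or_pos i.1 with h0 | hpos
    · obtain ⟨w, hw⟩ := noIso (s.get i)
      exact ⟨w, hw, fun j hj => absurd (Fin.lt_def.mp hj) (by omega)⟩
    · obtain ⟨w, hw1, hw2⟩ := hleg i.1 i.2 hpos
      refine ⟨w, hw1, fun j hj => hw2 (s.get j) ?_⟩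
      have hj' : j.1 < (s.take i.1).length := by
        rw [List.length_take]; exact lt_min (Fin.lt_def.mp hj) j.2
      have hmem := List.getElem_mem hj'
      rw [List.getElem_take] at hmem
      simpa [List.get_eq_getElem] using hmem
  choose w hw1 hw2 using hex
  set g : Fin s.length → W := fun i => ⟨rows (s.get i), rows_mem _⟩ with hg
  have hli : LinearIndependent (ZMod 2) g := by
    rw [Fintype.linearIndependent_iff]
    intro c hc
    by_contra hne
    push_neg at hne
    obtain ⟨i0, hi0⟩ := hne
    have hFne : (Finset.univ.filter (fun i => c i ≠ 0)).Nonempty := ⟨i0, by simp [hi0]⟩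
    set i := (Finset.univ.filter (fun i => c i ≠ 0)).max' hFne with hi
    have hci : c i ≠ 0 := by
      have := Finset.max'_mem _ hFne
      simpa [← hi] using this
    have hmax : ∀ j, c j ≠ 0 → j ≤ i := fun j hj =>
      Finset.le_max' _ j (by simpa using hj)
    have hc' : (∑ j, c j • rows (s.get j)) = (0 : VV' → ZMod 2) := by
      have h2 := congrArg (fun z : W => (z : VV' → ZMod 2)) hc
      simpa [hg] using h2
    have h3 := congrFun hc' (w i)
    rw [Finset.sum_apply] at h3
    simp only [Pi.smul_apply, smul_eq_mul, Pi.zero_apply] at h3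
    rw [Finset.sum_eq_single i] at h3
    · rw [rows] at h3
      simp only [if_pos (hw1 i), mul_one] at h3
      exact hci h3
    · intro j _ hji
      rcases lt_or_gt_of_ne hji with h | h
      · rw [rows]
        simp only [if_neg (hw2 i j h), mul_zero]
      · have hcj : c j = 0 := by
          by_contra hcj
          exact absurd (hmax j hcj) (not_le.mpr h)
        rw [hcj, zero_mul]
    · intro h
      exact absurd (Finset.mem_univ i) h
  have h2 : Fintype.card (Fin s.length) ≤ Module.finrank (ZMod 2) W :=
    hli.fintype_card_le_finrank
  have h3 : Module.finrank (ZMod 2) W ≤ 8 := by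
    have := finrank_range_le_card (R := ZMod 2) Bvec
    simpa [Set.finrank] using this
  simpa using h2.trans h3

theorem tds_ge4 (B : Set VV) (hB : TotalDomSet (lineK 6) B) : 4 ≤ B.ncard := by
  by_contra hcon
  push_neg at hcon
  have hfin : B.Finite := Set.toFinite B
  set l := hfin.toFinset.toList with hl
  have hlen : l.length ≤ 3 := by
    have h1 : l.length = hfin.toFinset.card := Finset.length_toList _
    have h2 : B.ncard = hfin.toFinset.card := Set.ncard_eq_toFinset_card B hfin
    omega
  set d : VV := ⟨{0,1}, by decide⟩ with hd
  have hsub : ∀ x ∈ B, x = l.getD 0 d ∨ x = l.getD 1 d ∨ x = l.getD 2 d := by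
    intro x hx
    have hxl : x ∈ l := by
      rw [hl, Finset.mem_toList, Set.Finite.mem_toFinset]
      exact hx
    obtain ⟨n, hn, hget⟩ := List.getElem_of_mem hxl
    have hn3 : n = 0 ∨ n = 1 ∨ n = 2 := by omega
    rcases hn3 with rfl | rfl | rfl
    · left; rw [List.getD_eq_getElem l d hn, hget]
    · right; left; rw [List.getD_eq_getElem l d hn, hget]
    · right; right; rw [List.getD_eq_getElem l d hn, hget]
  obtain ⟨v, h1, h2, h3⟩ := noTDS3 (l.getD 0 d) (l.getD 1 d) (l.getD 2 d)
  obtain ⟨u, huB, hadj⟩ := hB v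
  rcases hsub u huB with rfl | rfl | rfl
  · exact h1 hadj
  · exact h2 hadj
  · exact h3 hadj

theorem tds_double_ge8 (A : Set VV') (hA : TotalDomSet GG A) : 8 ≤ A.ncard := by
  classical
  set B0 : Set VV := {v | (v, (0 : Fin 2)) ∈ A} with hB0def
  set B1 : Set VV := {v | (v, (1 : Fin 2)) ∈ A} with hB1def
  have hB0 : TotalDomSet (lineK 6) B0 := by
    intro v
    obtain ⟨a, haA, hadj⟩ := hA (v, 1)
    obtain ⟨a1, a2⟩ := a
    have hadj' : (lineK 6).Adj v a1 ∧ (⊤ : SimpleGraph (Fin 2)).Adj 1 a2 := hadj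
    have ha2 : a2 = 0 := by
      have hne := hadj'.2.ne
      fin_cases a2
      · rfl
      · exact absurd rfl hne
    rw [ha2] at haA
    exact ⟨a1, haA, hadj'.1⟩
  have hB1 : TotalDomSet (lineK 6) B1 := by
    intro v
    obtain ⟨a, haA, hadj⟩ := hA (v, 0)
    obtain ⟨a1, a2⟩ := a
    have hadj' : (lineK 6).Adj v a1 ∧ (⊤ : SimpleGraph (Fin 2)).Adj 0 a2 := hadj
    have ha2 : a2 = 1 := by
      have hne := hadj'.2.ne
      fin_cases a2
      · exact absurd rfl hne
      · rfl
    rw [ha2] at haA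
    exact ⟨a1, haA, hadj'.1⟩
  have hAeq : A = ((fun v : VV => (v, (0 : Fin 2))) '' B0) ∪
      ((fun v : VV => (v, (1 : Fin 2))) '' B1) := by
    ext x
    obtain ⟨v, ε⟩ := x
    simp only [Set.mem_union, Set.mem_image]
    constructor
    · intro h
      fin_cases ε
      · exact Or.inl ⟨v, h, rfl⟩
      · exact Or.inr ⟨v, h, rfl⟩
    · rintro (⟨u, hu, huv⟩ | ⟨u, hu, huv⟩)
      · injection huv with h1 h2
        subst h1; subst h2
        exact hu
      · injection huv with h1 h2
        subst h1; subst h2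
        exact hu
  have hdisj : Disjoint ((fun v : VV => (v, (0 : Fin 2))) '' B0)
      ((fun v : VV => (v, (1 : Fin 2))) '' B1) := by
    rw [Set.disjoint_left]
    rintro x ⟨u, _, rfl⟩ ⟨u', _, hx⟩
    have h2 : (1 : Fin 2) = 0 := congrArg Prod.snd hx
    exact absurd h2 (by decide)
  have hinj0 : Function.Injective (fun v : VV => (v, (0 : Fin 2))) :=
    fun a b h => congrArg Prod.fst h
  have hinj1 : Function.Injective (fun v : VV => (v, (1 : Fin 2))) :=
    fun a b h => congrArg Prod.fst h
  rw [hAeq, Set.ncard_union_eq hdisj (Set.toFinite _) (Set.toFinite _),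
    Set.ncard_image_of_injective _ hinj0, Set.ncard_image_of_injective _ hinj1]
  have g0 := tds_ge4 B0 hB0
  have g1 := tds_ge4 B1 hB1
  omega

def F8 : Finset VV' :=
  {(b4 0, 0), (b4 1, 0), (b4 2, 0), (b4 3, 0), (b4 0, 1), (b4 1, 1), (b4 2, 1), (b4 3, 1)}

theorem tds_F8 : TotalDomSet GG {x | x ∈ F8} := by
  unfold TotalDomSet
  decide

theorem card_F8 : ({x | x ∈ F8} : Set VV').ncard = 8 := by
  have h : ({x | x ∈ F8} : Set VV') = ↑F8 := rfl
  rw [h, Set.ncard_coe_finset]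
  decide

def L8 : List VV' :=
  [(b4 0, 0), (b4 1, 0), (b4 2, 0), (b4 3, 0), (b4 0, 1), (b4 1, 1), (b4 2, 1), (b4 3, 1)]

theorem seq_L8 : TotalDomSeq GG L8 := by
  unfold TotalDomSeq LegalSeq TotalDomSet
  refine ⟨⟨by decide, ?_⟩, by decide⟩
  have h : ∀ i : Fin L8.length, 0 < (i : ℕ) →
      ∃ w : VV', GG.Adj (L8.get i) w ∧ ∀ u ∈ L8.take i, ¬GG.Adj u w := by decide
  intro i hi hpos
  exact h ⟨i, hi⟩ hpos

def root : VV' := (⟨{0,1}, by decide⟩, 0)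

def allL : List VV' :=
[(⟨{0,1}, by decide⟩, 0),
 (⟨{0,1}, by decide⟩, 1),
 (⟨{0,2}, by decide⟩, 0),
 (⟨{0,2}, by decide⟩, 1),
 (⟨{0,3}, by decide⟩, 0),
 (⟨{0,3}, by decide⟩, 1),
 (⟨{0,4}, by decide⟩, 0),
 (⟨{0,4}, by decide⟩, 1),
 (⟨{0,5}, by decide⟩, 0),
 (⟨{0,5}, by decide⟩, 1),
 (⟨{1,2}, by decide⟩, 0),
 (⟨{1,2}, by decide⟩, 1),
 (⟨{1,3}, by decide⟩, 0),
 (⟨{1,3}, by decide⟩, 1),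
 (⟨{1,4}, by decide⟩, 0),
 (⟨{1,4}, by decide⟩, 1),
 (⟨{1,5}, by decide⟩, 0),
 (⟨{1,5}, by decide⟩, 1),
 (⟨{2,3}, by decide⟩, 0),
 (⟨{2,3}, by decide⟩, 1),
 (⟨{2,4}, by decide⟩, 0),
 (⟨{2,4}, by decide⟩, 1),
 (⟨{2,5}, by decide⟩, 0),
 (⟨{2,5}, by decide⟩, 1),
 (⟨{3,4}, by decide⟩, 0),
 (⟨{3,4}, by decide⟩, 1),
 (⟨{3,5}, by decide⟩, 0),
 (⟨{3,5}, by decide⟩, 1),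
 (⟨{4,5}, by decide⟩, 0),
 (⟨{4,5}, by decide⟩, 1)]

theorem reach_all : ∀ v : VV', GG.Reachable root v := by
  have r01_0 : GG.Reachable root root := SimpleGraph.Reachable.refl _
  have r02_1 : GG.Reachable root ((⟨{0,2}, by decide⟩, 1)) := r01_0.trans ((by decide : GG.Adj ((⟨{0,1}, by decide⟩, 0)) ((⟨{0,2}, by decide⟩, 1))).reachable)
  have r03_1 : GG.Reachable root ((⟨{0,3}, by decide⟩, 1)) := r01_0.trans ((by decide : GG.Adj ((⟨{0,1}, by decide⟩, 0)) ((⟨{0,3}, by decide⟩, 1))).reachable)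
  have r04_1 : GG.Reachable root ((⟨{0,4}, by decide⟩, 1)) := r01_0.trans ((by decide : GG.Adj ((⟨{0,1}, by decide⟩, 0)) ((⟨{0,4}, by decide⟩, 1))).reachable)
  have r05_1 : GG.Reachable root ((⟨{0,5}, by decide⟩, 1)) := r01_0.trans ((by decide : GG.Adj ((⟨{0,1}, by decide⟩, 0)) ((⟨{0,5}, by decide⟩, 1))).reachable)
  have r12_1 : GG.Reachable root ((⟨{1,2}, by decide⟩, 1)) := r01_0.trans ((by decide : GG.Adj ((⟨{0,1}, by decide⟩, 0)) ((⟨{1,2}, by decide⟩, 1))).reachable)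
  have r13_1 : GG.Reachable root ((⟨{1,3}, by decide⟩, 1)) := r01_0.trans ((by decide : GG.Adj ((⟨{0,1}, by decide⟩, 0)) ((⟨{1,3}, by decide⟩, 1))).reachable)
  have r14_1 : GG.Reachable root ((⟨{1,4}, by decide⟩, 1)) := r01_0.trans ((by decide : GG.Adj ((⟨{0,1}, by decide⟩, 0)) ((⟨{1,4}, by decide⟩, 1))).reachable)
  have r15_1 : GG.Reachable root ((⟨{1,5}, by decide⟩, 1)) := r01_0.trans ((by decide : GG.Adj ((⟨{0,1}, by decide⟩, 0)) ((⟨{1,5}, by decide⟩, 1))).reachable)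
  have r03_0 : GG.Reachable root ((⟨{0,3}, by decide⟩, 0)) := r02_1.trans ((by decide : GG.Adj ((⟨{0,2}, by decide⟩, 1)) ((⟨{0,3}, by decide⟩, 0))).reachable)
  have r04_0 : GG.Reachable root ((⟨{0,4}, by decide⟩, 0)) := r02_1.trans ((by decide : GG.Adj ((⟨{0,2}, by decide⟩, 1)) ((⟨{0,4}, by decide⟩, 0))).reachable)
  have r05_0 : GG.Reachable root ((⟨{0,5}, by decide⟩, 0)) := r02_1.trans ((by decide : GG.Adj ((⟨{0,2}, by decide⟩, 1)) ((⟨{0,5}, by decide⟩, 0))).reachable)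
  have r12_0 : GG.Reachable root ((⟨{1,2}, by decide⟩, 0)) := r02_1.trans ((by decide : GG.Adj ((⟨{0,2}, by decide⟩, 1)) ((⟨{1,2}, by decide⟩, 0))).reachable)
  have r23_0 : GG.Reachable root ((⟨{2,3}, by decide⟩, 0)) := r02_1.trans ((by decide : GG.Adj ((⟨{0,2}, by decide⟩, 1)) ((⟨{2,3}, by decide⟩, 0))).reachable)
  have r24_0 : GG.Reachable root ((⟨{2,4}, by decide⟩, 0)) := r02_1.trans ((by decide : GG.Adj ((⟨{0,2}, by decide⟩, 1)) ((⟨{2,4}, by decide⟩, 0))).reachable)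
  have r25_0 : GG.Reachable root ((⟨{2,5}, by decide⟩, 0)) := r02_1.trans ((by decide : GG.Adj ((⟨{0,2}, by decide⟩, 1)) ((⟨{2,5}, by decide⟩, 0))).reachable)
  have r02_0 : GG.Reachable root ((⟨{0,2}, by decide⟩, 0)) := r03_1.trans ((by decide : GG.Adj ((⟨{0,3}, by decide⟩, 1)) ((⟨{0,2}, by decide⟩, 0))).reachable)
  have r13_0 : GG.Reachable root ((⟨{1,3}, by decide⟩, 0)) := r03_1.trans ((by decide : GG.Adj ((⟨{0,3}, by decide⟩, 1)) ((⟨{1,3}, by decide⟩, 0))).reachable)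
  have r34_0 : GG.Reachable root ((⟨{3,4}, by decide⟩, 0)) := r03_1.trans ((by decide : GG.Adj ((⟨{0,3}, by decide⟩, 1)) ((⟨{3,4}, by decide⟩, 0))).reachable)
  have r35_0 : GG.Reachable root ((⟨{3,5}, by decide⟩, 0)) := r03_1.trans ((by decide : GG.Adj ((⟨{0,3}, by decide⟩, 1)) ((⟨{3,5}, by decide⟩, 0))).reachable)
  have r14_0 : GG.Reachable root ((⟨{1,4}, by decide⟩, 0)) := r04_1.trans ((by decide : GG.Adj ((⟨{0,4}, by decide⟩, 1)) ((⟨{1,4}, by decide⟩, 0))).reachable)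
  have r45_0 : GG.Reachable root ((⟨{4,5}, by decide⟩, 0)) := r04_1.trans ((by decide : GG.Adj ((⟨{0,4}, by decide⟩, 1)) ((⟨{4,5}, by decide⟩, 0))).reachable)
  have r15_0 : GG.Reachable root ((⟨{1,5}, by decide⟩, 0)) := r05_1.trans ((by decide : GG.Adj ((⟨{0,5}, by decide⟩, 1)) ((⟨{1,5}, by decide⟩, 0))).reachable)
  have r01_1 : GG.Reachable root ((⟨{0,1}, by decide⟩, 1)) := r03_0.trans ((by decide : GG.Adj ((⟨{0,3}, by decide⟩, 0)) ((⟨{0,1}, by decide⟩, 1))).reachable)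
  have r23_1 : GG.Reachable root ((⟨{2,3}, by decide⟩, 1)) := r03_0.trans ((by decide : GG.Adj ((⟨{0,3}, by decide⟩, 0)) ((⟨{2,3}, by decide⟩, 1))).reachable)
  have r34_1 : GG.Reachable root ((⟨{3,4}, by decide⟩, 1)) := r03_0.trans ((by decide : GG.Adj ((⟨{0,3}, by decide⟩, 0)) ((⟨{3,4}, by decide⟩, 1))).reachable)
  have r35_1 : GG.Reachable root ((⟨{3,5}, by decide⟩, 1)) := r03_0.trans ((by decide : GG.Adj ((⟨{0,3}, by decide⟩, 0)) ((⟨{3,5}, by decide⟩, 1))).reachable)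
  have r24_1 : GG.Reachable root ((⟨{2,4}, by decide⟩, 1)) := r04_0.trans ((by decide : GG.Adj ((⟨{0,4}, by decide⟩, 0)) ((⟨{2,4}, by decide⟩, 1))).reachable)
  have r45_1 : GG.Reachable root ((⟨{4,5}, by decide⟩, 1)) := r04_0.trans ((by decide : GG.Adj ((⟨{0,4}, by decide⟩, 0)) ((⟨{4,5}, by decide⟩, 1))).reachable)
  have r25_1 : GG.Reachable root ((⟨{2,5}, by decide⟩, 1)) := r05_0.trans ((by decide : GG.Adj ((⟨{0,5}, by decide⟩, 0)) ((⟨{2,5}, by decide⟩, 1))).reachable)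
  have hall : ∀ v : VV', v ∈ allL := by decide
  intro v
  have hv := hall v
  simp only [allL, List.mem_cons, List.not_mem_nil, or_false] at hv
  rcases hv with rfl|rfl|rfl|rfl|rfl|rfl|rfl|rfl|rfl|rfl|rfl|rfl|rfl|rfl|rfl|rfl|rfl|rfl|rfl|rfl|rfl|rfl|rfl|rfl|rfl|rfl|rfl|rfl|rfl|rfl
  exacts [r01_0, r01_1, r02_0, r02_1, r03_0, r03_1, r04_0, r04_1, r05_0, r05_1, r12_0, r12_1, r13_0, r13_1, r14_0, r14_1, r15_0, r15_1, r23_0, r23_1, r24_0, r24_1, r25_0, r25_1, r34_0, r34_1, r35_0, r35_1, r45_0, r45_1]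

end Stmt12Aux


open Stmt12Aux in
/-- The bipartite double cover `L(K₆) × K₂` is connected and total 8-uniform. -/
theorem stmt_12 :
    (directProd (lineK 6) (⊤ : SimpleGraph (Fin 2))).Connected ∧
    TotalKUniform (directProd (lineK 6) (⊤ : SimpleGraph (Fin 2))) 8 := by
  have hconn : GG.Connected := by
    have hne : Nonempty VV' := ⟨root⟩
    exact ⟨fun u v => (reach_all u).symm.trans (reach_all v)⟩
  have htdn : totalDomNum GG = 8 := by
    have h8 : (8:ℕ) ∈ {n | ∃ A : Set VV', TotalDomSet GG A ∧ A.ncard = n} :=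
      ⟨{x | x ∈ F8}, tds_F8, card_F8⟩
    have hlb : ∀ n ∈ {n | ∃ A : Set VV', TotalDomSet GG A ∧ A.ncard = n}, 8 ≤ n := by
      rintro n ⟨A, hA, rfl⟩
      exact tds_double_ge8 A hA
    unfold totalDomNum
    exact le_antisymm (Nat.sInf_le h8) (le_csInf ⟨8, h8⟩ hlb)
  have hgdn : grundyTotalDomNum GG = 8 := by
    have h8 : (8:ℕ) ∈ {n | ∃ s : List VV', TotalDomSeq GG s ∧ s.length = n} := ⟨L8, seq_L8, rfl⟩
    have hub : ∀ n ∈ {n | ∃ s : List VV', TotalDomSeq GG s ∧ s.length = n}, n ≤ 8 := by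
      rintro n ⟨s, hs, rfl⟩
      exact legal_le_8 s hs.1
    unfold grundyTotalDomNum
    exact le_antisymm (csSup_le ⟨8, h8⟩ hub) (le_csSup ⟨8, hub⟩ h8)
  exact ⟨hconn, htdn, hgdn⟩
end

section
/- Let G be a total k-uniform graph. Then either G is the disjoint union of k/2 stars, or G has girth at most 6 (i.e., G contains a cycle of length at most 6). -/
open SimpleGraph

/-- `G` is the disjoint union of `m` stars: `f` assigns each vertex its star, each star `i`
has a center `center i` and at least one other vertex, and two vertices are adjacent iff they
are distinct, lie in the same star, and one of them is its center. -/
def DisjUnionStars {V : Type*} (G : SimpleGraph V) (m : ℕ) : Prop :=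
  ∃ (f : V → Fin m) (center : Fin m → V),
    (∀ i : Fin m, f (center i) = i) ∧
    (∀ i : Fin m, ∃ v : V, f v = i ∧ v ≠ center i) ∧
    (∀ u v : V, G.Adj u v ↔
      (u ≠ v ∧ f u = f v ∧ (u = center (f u) ∨ v = center (f v))))

section AuxSection
variable {V : Type*}

/-- `w` has a neighbour in `A`. -/
def cov (G : SimpleGraph V) (A : Set V) (w : V) : Prop := ∃ u ∈ A, G.Adj u w

/-- `v` is a leaf: it has a unique neighbour. -/
def IsLf (G : SimpleGraph V) (v : V) : Prop := ∃ s, ∀ t, G.Adj v t ↔ t = s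

/-- `v` is a star centre: it has a leaf neighbour. -/
def IsCt (G : SimpleGraph V) (v : V) : Prop := ∃ u, G.Adj v u ∧ ∀ t, G.Adj u t ↔ t = v

lemma egirth_le_cycle {G : SimpleGraph V} {a : V} {w : G.Walk a a} (h : w.IsCycle) :
    G.egirth ≤ w.length := by
  simp only [egirth]
  exact iInf_le_of_le a (iInf_le_of_le w (iInf_le_of_le h le_rfl))

lemma noC3 {G : SimpleGraph V} (hg : ¬ G.egirth ≤ 6) {a b c : V}
    (h1 : G.Adj a b) (h2 : G.Adj b c) (h3 : G.Adj c a) : False := by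
  apply hg
  have hcyc : (Walk.cons h1 (Walk.cons h2 (Walk.cons h3 Walk.nil))).IsCycle := by
    simp [Walk.isCycle_def, Walk.isTrail_def, Sym2.eq_iff, List.pairwise_cons,
      h1.ne, h2.ne, h3.ne, h1.ne', h2.ne', h3.ne']
  have := egirth_le_cycle hcyc
  simp only [Walk.length_cons, Walk.length_nil] at this
  exact le_trans this (by norm_num)

lemma noC4 {G : SimpleGraph V} (hg : ¬ G.egirth ≤ 6) {a b c d : V}
    (h1 : G.Adj a b) (h2 : G.Adj b c) (h3 : G.Adj c d) (h4 : G.Adj d a)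
    (hac : a ≠ c) (hbd : b ≠ d) : False := by
  apply hg
  have hcyc : (Walk.cons h1 (Walk.cons h2 (Walk.cons h3 (Walk.cons h4 Walk.nil)))).IsCycle := by
    simp [Walk.isCycle_def, Walk.isTrail_def, Sym2.eq_iff, List.pairwise_cons,
      h1.ne, h2.ne, h3.ne, h4.ne, h1.ne', h2.ne', h3.ne', h4.ne', hac, hbd, hac.symm, hbd.symm]
  have := egirth_le_cycle hcyc
  simp only [Walk.length_cons, Walk.length_nil] at this
  exact le_trans this (by norm_num)

lemma noC6 {G : SimpleGraph V} (hg : ¬ G.egirth ≤ 6) {a b c d e f : V}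
    (h1 : G.Adj a b) (h2 : G.Adj b c) (h3 : G.Adj c d) (h4 : G.Adj d e)
    (h5 : G.Adj e f) (h6 : G.Adj f a)
    (hac : a ≠ c) (had : a ≠ d) (hae : a ≠ e) (hbd : b ≠ d) (hbe : b ≠ e)
    (hbf : b ≠ f) (hce : c ≠ e) (hcf : c ≠ f) (hdf : d ≠ f) : False := by
  apply hg
  have hcyc : (Walk.cons h1 (Walk.cons h2 (Walk.cons h3 (Walk.cons h4
      (Walk.cons h5 (Walk.cons h6 Walk.nil)))))).IsCycle := by
    simp [Walk.isCycle_def, Walk.isTrail_def, Sym2.eq_iff, List.pairwise_cons,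
      h1.ne, h2.ne, h3.ne, h4.ne, h5.ne, h6.ne,
      h1.ne', h2.ne', h3.ne', h4.ne', h5.ne', h6.ne',
      hac, had, hae, hbd, hbe, hbf, hce, hcf, hdf,
      hac.symm, had.symm, hae.symm, hbd.symm, hbe.symm, hbf.symm, hce.symm, hcf.symm, hdf.symm]
  have := egirth_le_cycle hcyc
  simp only [Walk.length_cons, Walk.length_nil] at this
  exact le_trans this (by norm_num)

lemma legalSeq_iff_parts {G : SimpleGraph V} {s : List V} :
    LegalSeq G s ↔ s.Nodup ∧ ∀ t e r, s = t ++ e :: r → t ≠ [] →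
      ∃ w, G.Adj e w ∧ ∀ u ∈ t, ¬ G.Adj u w := by
  constructor
  · rintro ⟨hnd, h⟩
    refine ⟨hnd, ?_⟩
    intro t e r hs ht
    have hlen : t.length < s.length := by subst hs; simp
    obtain ⟨w, hw1, hw2⟩ := h t.length hlen (by cases t with
      | nil => exact absurd rfl ht
      | cons a l => simp)
    have hget : s.get ⟨t.length, hlen⟩ = e := by
      subst hs
      simp [List.get_eq_getElem, List.getElem_append_right (le_refl t.length)]
    have htake : s.take t.length = t := by
      subst hs; exact List.take_left
    rw [hget] at hw1
    rw [htake] at hw2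
    exact ⟨w, hw1, hw2⟩
  · rintro ⟨hnd, h⟩
    refine ⟨hnd, ?_⟩
    intro i hi hpos
    have hdecomp : s = s.take i ++ s.get ⟨i, hi⟩ :: s.drop (i + 1) := by
      conv_lhs => rw [← List.take_append_drop i s]
      rw [List.drop_eq_getElem_cons hi]
      rfl
    obtain ⟨w, hw1, hw2⟩ := h _ _ _ hdecomp (by
      have : (s.take i).length = i := by simp; omega
      intro hnil
      rw [hnil] at this
      simp at this
      omega)
    exact ⟨w, hw1, hw2⟩

lemma legal_singleton {G : SimpleGraph V} (x : V) : LegalSeq G [x] := by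
  refine ⟨by simp, ?_⟩
  intro i hi hpos
  simp at hi
  omega

lemma legal_snoc {G : SimpleGraph V} {s : List V} {e w : V} (hs : LegalSeq G s)
    (he : e ∉ s) (hw : G.Adj e w) (hf : ∀ u ∈ s, ¬ G.Adj u w) : LegalSeq G (s ++ [e]) := by
  rw [legalSeq_iff_parts] at hs ⊢
  refine ⟨by rw [List.nodup_append]; exact ⟨hs.1, List.nodup_singleton e, by
    simpa [List.disjoint_singleton] using (fun a ha h => he (h ▸ ha) : ∀ a ∈ s, ¬a = e)⟩, ?_⟩
  intro t e' r hdec ht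
  rcases List.eq_nil_or_concat r with rfl | ⟨r', x, rfl⟩
  · have h1 : s = t ∧ [e] = [e'] := List.append_inj hdec (by
      have := congrArg List.length hdec
      simpa using this)
    obtain ⟨rfl, h2⟩ := h1
    simp at h2
    subst h2
    exact ⟨w, hw, hf⟩
  · have hdec' : s ++ [e] = (t ++ e' :: r') ++ [x] := by
      rw [hdec]; simp
    have h1 : s = t ++ e' :: r' ∧ [e] = [x] := List.append_inj' hdec' rfl
    exact hs.2 t e' r' h1.1 ht

lemma legal_transfer {G : SimpleGraph V} {p q z : List V} (hp : p ≠ [])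
    (hpz : LegalSeq G (p ++ z)) (hq : LegalSeq G q) (hnd : (q ++ z).Nodup)
    (hcov : ∀ w, (∃ u ∈ q, G.Adj u w) → ∃ u ∈ p, G.Adj u w) :
    LegalSeq G (q ++ z) := by
  rw [legalSeq_iff_parts] at hpz hq ⊢
  refine ⟨hnd, ?_⟩
  intro t e r hdec ht
  rcases List.append_eq_append_iff.mp hdec.symm with ⟨a', ha1, ha2⟩ | ⟨c', hc1, hc2⟩
  · -- ha1 : q = t ++ a', ha2 : e :: r = a' ++ z
    cases a' with
    | nil =>
      simp at ha1 ha2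
      have hdp : p ++ z = p ++ e :: r := by rw [ha2]
      obtain ⟨w, hw1, hw2⟩ := hpz.2 p e r hdp hp
      refine ⟨w, hw1, ?_⟩
      intro u hu hadj
      obtain ⟨u', hu', hadj'⟩ := hcov w ⟨u, by rw [ha1]; exact hu, hadj⟩
      exact hw2 u' hu' hadj'
    | cons y a'' =>
      have hy : y = e := by
        have := ha2
        simp at this
        exact this.1.symm
      subst hy
      exact hq.2 t y a'' ha1 ht
  · -- hc1 : t = q ++ c', hc2 : z = c' ++ e :: r
    have hdp : p ++ z = (p ++ c') ++ e :: r := by rw [hc2]; simp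
    obtain ⟨w, hw1, hw2⟩ := hpz.2 (p ++ c') e r hdp (by
      intro hnil
      rcases List.append_eq_nil_iff.mp hnil with ⟨h1, _⟩
      exact hp h1)
    refine ⟨w, hw1, ?_⟩
    intro u hu
    rw [hc1] at hu
    rcases List.mem_append.mp hu with h | h
    · intro hadj
      obtain ⟨u', hu', hadj'⟩ := hcov w ⟨u, h, hadj⟩
      exact hw2 u' (List.mem_append_left c' hu') hadj'
    · exact hw2 u (List.mem_append_right p h)

lemma tds_univ {G : SimpleGraph V} (hiso : NoIsolatedVerts G) : TotalDomSet G Set.univ :=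
  fun v => (hiso v).imp fun w hw => ⟨Set.mem_univ w, hw⟩

lemma ncard_ge {G : SimpleGraph V} {k : ℕ} (huni : TotalKUniform G k) {A : Set V}
    (hA : TotalDomSet G A) : k ≤ A.ncard := by
  rw [← huni.1]
  exact Nat.sInf_le ⟨A, hA, rfl⟩

lemma extend_to_tds [Finite V] {G : SimpleGraph V} (hiso : NoIsolatedVerts G)
    {s : List V} (hs : LegalSeq G s) : ∃ z, TotalDomSeq G (s ++ z) := by
  haveI := Fintype.ofFinite V
  suffices h : ∀ (fuel : ℕ) (s : List V), LegalSeq G s → Fintype.card V ≤ s.length + fuel →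
      ∃ z, TotalDomSeq G (s ++ z) by
    exact h (Fintype.card V) s hs (by omega)
  intro fuel
  induction fuel with
  | zero =>
    intro s hs hc
    have hall : ∀ v : V, v ∈ s := by
      classical
      have h1 : s.toFinset.card = s.length := List.toFinset_card_of_nodup hs.1
      have h2 : s.toFinset = Finset.univ := Finset.eq_univ_of_card _ (by
        have := Finset.card_le_univ s.toFinset
        omega)
      intro v
      rw [← List.mem_toFinset, h2]
      exact Finset.mem_univ v
    refine ⟨[], ?_⟩
    rw [List.append_nil]
    exact ⟨hs, fun v => (hiso v).imp fun w hw => ⟨hall w, hw⟩⟩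
  | succ n ih =>
    intro s hs hc
    by_cases hT : TotalDomSet G {v | v ∈ s}
    · exact ⟨[], by rw [List.append_nil]; exact ⟨hs, hT⟩⟩
    · rw [TotalDomSet] at hT
      push_neg at hT
      obtain ⟨v, hv⟩ := hT
      obtain ⟨w, hw⟩ := hiso v
      have hwns : w ∉ s := fun h => hv w h hw
      have hfresh : ∀ u ∈ s, ¬ G.Adj u v := fun u hu hadj => hv u hu hadj.symm
      have hs' := legal_snoc hs hwns hw.symm hfresh
      obtain ⟨z, hz⟩ := ih (s ++ [w]) hs' (by simp; omega)
      refine ⟨w :: z, ?_⟩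
      rwa [List.append_assoc, List.singleton_append] at hz

lemma tdseq_le [Finite V] {G : SimpleGraph V} {k : ℕ} (huni : TotalKUniform G k)
    {s : List V} (ht : TotalDomSeq G s) : s.length ≤ k := by
  haveI := Fintype.ofFinite V
  rw [← huni.2]
  apply le_csSup
  · refine ⟨Fintype.card V, ?_⟩
    rintro n ⟨t, ht', rfl⟩
    exact ht'.1.1.length_le_card
  · exact ⟨s, ht, rfl⟩

lemma tdseq_ge [Finite V] {G : SimpleGraph V} {k : ℕ} (huni : TotalKUniform G k)
    {s : List V} (ht : TotalDomSeq G s) : k ≤ s.length := by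
  classical
  have h1 : k ≤ {v | v ∈ s}.ncard := ncard_ge huni ht.2
  have h2 : {v | v ∈ s}.ncard = s.length := by
    have h3 : {v | v ∈ s} = (↑s.toFinset : Set V) := by ext a; simp
    rw [h3, Set.ncard_coe_finset, List.toFinset_card_of_nodup ht.1.1]
  omega

lemma legal_le [Finite V] {G : SimpleGraph V} {k : ℕ} (hiso : NoIsolatedVerts G)
    (huni : TotalKUniform G k) {s : List V} (hs : LegalSeq G s) : s.length ≤ k := by
  obtain ⟨z, hz⟩ := extend_to_tds hiso hs
  have h1 := tdseq_le huni hz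
  simp at h1
  omega

lemma exists_priv [Finite V] {G : SimpleGraph V} {k : ℕ} (huni : TotalKUniform G k)
    {D : Set V} (hD : TotalDomSet G D) (hDc : D.ncard = k) {e : V} (he : e ∈ D) :
    ∃ w, G.Adj e w ∧ ¬ cov G (D \ {e}) w := by
  by_contra hc
  push_neg at hc
  have hT : TotalDomSet G (D \ {e}) := by
    intro v
    obtain ⟨a, ha, hva⟩ := hD v
    by_cases hae : a = e
    · subst hae
      obtain ⟨u, hu, huw⟩ := hc v hva.symm
      exact ⟨u, hu, huw.symm⟩
    · exact ⟨a, ⟨ha, hae⟩, hva⟩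
  have h1 : k ≤ (D \ {e}).ncard := ncard_ge huni hT
  have h2 : (D \ {e}).ncard = k - 1 := by
    rw [Set.ncard_diff (by simpa using he)]
    simp [hDc]
  have h3 : 1 ≤ k := by
    rw [← hDc]
    have : D.Nonempty := ⟨e, he⟩
    have := Set.ncard_pos (Set.toFinite D) |>.mpr this
    omega
  omega

lemma noNest [Finite V] {G : SimpleGraph V} {k : ℕ} (hiso : NoIsolatedVerts G)
    (huni : TotalKUniform G k) {u v : V}
    (hsub : ∀ t, G.Adj u t → G.Adj v t) {t0 : V} (h1 : G.Adj v t0) (h2 : ¬ G.Adj u t0) :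
    False := by
  have huv : u ≠ v := fun h => h2 (h ▸ h1)
  have hleg : LegalSeq G [u, v] := by
    refine ⟨by simp [huv], ?_⟩
    intro i hi hpos
    simp at hi
    have : i = 1 := by omega
    subst this
    refine ⟨t0, by simpa using h1, ?_⟩
    intro x hx
    simp at hx
    subst hx
    exact h2
  obtain ⟨z, hz⟩ := extend_to_tds hiso hleg
  have hq : LegalSeq G [v] := legal_singleton v
  have hnd : ([v] ++ z).Nodup := by
    have hbig := hz.1.1
    have hsub' : ([v] ++ z).Sublist ([u, v] ++ z) := by
      simp only [List.cons_append, List.singleton_append]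
      exact List.Sublist.cons u (List.Sublist.refl _)
    exact hbig.sublist hsub'
  have hleg2 := legal_transfer (by simp) hz.1 hq hnd (by
    rintro w ⟨u', hu', hadj⟩
    simp at hu'
    exact ⟨v, by simp, hu' ▸ hadj⟩)
  have hT2 : TotalDomSet G {a | a ∈ [v] ++ z} := by
    intro y
    obtain ⟨a, ha, hya⟩ := hz.2 y
    simp only [Set.mem_setOf_eq, List.cons_append, List.mem_cons] at ha
    rcases ha with rfl | ha
    · exact ⟨v, by simp, (hsub y hya.symm).symm⟩
    · simp only [List.nil_append] at ha
      exact ⟨a, by simp [ha], hya⟩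
  have hlen1 : k ≤ ([v] ++ z).length := tdseq_ge huni ⟨hleg2, hT2⟩
  have hlen2 : ([u, v] ++ z).length ≤ k := tdseq_le huni hz
  simp at hlen1 hlen2
  omega

lemma ml [Finite V] {G : SimpleGraph V} {k : ℕ} (hiso : NoIsolatedVerts G)
    (huni : TotalKUniform G k) (hg : ¬ G.egirth ≤ 6)
    {D : Set V} (hD : TotalDomSet G D) (hDc : D.ncard = k) {x : V} (hx : x ∉ D) :
    IsLf G x := by
  classical
  by_contra hxl
  set B : Set V := {e | e ∈ D ∧ ∀ w, G.Adj e w → cov G (insert x (D \ {e})) w} with hBdef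
  have hBD : B ⊆ D := fun e he => he.1
  have hBpriv : ∀ e ∈ B, ∃ w, G.Adj e w ∧ ¬ cov G (D \ {e}) w ∧ G.Adj x w := by
    intro e he
    obtain ⟨w, h1, h2⟩ := exists_priv huni hD hDc he.1
    obtain ⟨u, hu, hu2⟩ := he.2 w h1
    rcases Set.mem_insert_iff.mp hu with rfl | hu'
    · exact ⟨w, h1, h2, hu2⟩
    · exact absurd ⟨u, hu', hu2⟩ h2
  have hxD : ∀ e ∈ D, x ≠ e := fun e he h => hx (h ▸ he)
  have hnonsub : ∀ e ∈ D, ∃ t, G.Adj e t ∧ ¬ G.Adj x t := by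
    intro e he
    by_contra hc
    push_neg at hc
    by_cases hsub2 : ∀ t, G.Adj x t → G.Adj e t
    · obtain ⟨w0, hw0, _⟩ := exists_priv huni hD hDc he
      by_cases h2 : ∃ w1, G.Adj e w1 ∧ w1 ≠ w0
      · obtain ⟨w1, hw1, hne⟩ := h2
        exact noC4 hg hw0 (hc w0 hw0).symm (hc w1 hw1) hw1.symm (hxD e he).symm hne.symm
      · push_neg at h2
        exact hxl ⟨w0, fun t => ⟨fun h => h2 t (hsub2 t h), fun h => h ▸ hc w0 hw0⟩⟩
    · push_neg at hsub2
      obtain ⟨t0, ht0, hnt0⟩ := hsub2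
      exact noNest hiso huni hc ht0 hnt0
  have FL : ∀ T : Set V, T ⊆ B → T.Nonempty →
      ∃ e ∈ T, ∃ w, G.Adj e w ∧ ¬ cov G (insert x (B \ T)) w := by
    intro T hTB hTne
    by_contra hstuck
    push_neg at hstuck
    obtain ⟨e0, he0⟩ := hTne
    obtain ⟨we, hwe1, hwe2, hwe3⟩ := hBpriv e0 (hTB he0)
    obtain ⟨t0, ht01, ht02⟩ := hnonsub e0 (hBD (hTB he0))
    obtain ⟨f, hf, hft⟩ : ∃ f ∈ B \ T, G.Adj f t0 := by
      obtain ⟨u, hu, hut⟩ := hstuck e0 he0 t0 ht01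
      rcases Set.mem_insert_iff.mp hu with rfl | hu'
      · exact absurd hut ht02
      · exact ⟨u, hu', hut⟩
    obtain ⟨wf, hwf1, hwf2, hwf3⟩ := hBpriv f hf.1
    have hxe0 : ¬ G.Adj x e0 := fun h => noC3 hg hwe3 hwe1.symm h.symm
    have hxf : ¬ G.Adj x f := fun h => noC3 hg hwf3 hwf1.symm h.symm
    have hef : e0 ≠ f := fun h => hf.2 (h ▸ he0)
    have hwet0 : we ≠ t0 := fun h => ht02 (by rw [← h]; exact hwe3)
    have hwewf : we ≠ wf := by
      rintro rfl
      exact noC4 hg hwe1.symm ht01 hft.symm hwf1 hwet0 hef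
    exact noC6 hg hwe3 hwe1.symm ht01 hft.symm hwf1 hwf3.symm
      (hxD e0 (hBD (hTB he0)))
      (fun h => hxe0 (by rw [h]; exact ht01.symm))
      (hxD f (hBD hf.1))
      hwet0
      (fun h => hxf (by rw [← h]; exact hwe3))
      hwewf
      hef
      (fun h => hxe0 (by rw [h]; exact hwf3))
      (fun h => ht02 (by rw [h]; exact hwf3))
  have NS : ∀ R : Set V, R ⊆ D → R.Nonempty → (∀ e ∈ R, e ∉ B) →
      ∃ e ∈ R, ∃ w, G.Adj e w ∧ ¬ cov G (insert x (D \ R)) w := by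
    intro R hRD hRne hRB
    by_contra h
    push_neg at h
    have hT : TotalDomSet G (insert x (D \ R)) := by
      intro v
      obtain ⟨a, ha, hva⟩ := hD v
      by_cases haR : a ∈ R
      · obtain ⟨u, hu, huv⟩ := h a haR v hva.symm
        exact ⟨u, hu, huv.symm⟩
      · exact ⟨a, Set.mem_insert_of_mem _ ⟨ha, haR⟩, hva⟩
    have h1 : k ≤ (insert x (D \ R)).ncard := ncard_ge huni hT
    have h2 : (insert x (D \ R)).ncard ≤ (D \ R).ncard + 1 := Set.ncard_insert_le _ _
    have h3 : (D \ R).ncard = k - R.ncard := by rw [Set.ncard_diff hRD, hDc]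
    have h4 : R.ncard ≤ k := hDc ▸ Set.ncard_le_ncard hRD (Set.toFinite D)
    have h5 : 1 ≤ R.ncard := by
      have := (Set.ncard_pos (Set.toFinite R)).mpr hRne
      omega
    have hR1 : R.ncard = 1 := by omega
    obtain ⟨e, rfl⟩ := Set.ncard_eq_one.mp hR1
    refine hRB e rfl ⟨hRD rfl, ?_⟩
    intro w hw
    exact h e rfl w hw
  have L1 : ∀ n, ∀ R : Set V, R ⊆ D → (∀ e ∈ R, e ∉ B) → R.ncard = n →
      ∀ p : List V, LegalSeq G p → {a | a ∈ p} = insert x (D \ R) →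
      ∃ q : List V, LegalSeq G q ∧ {a | a ∈ q} = insert x D := by
    intro n
    induction n with
    | zero =>
      intro R hRD hRB hRn p hp hps
      have hRe : R = ∅ := (Set.ncard_eq_zero (Set.toFinite R)).mp hRn
      subst hRe
      exact ⟨p, hp, by simpa using hps⟩
    | succ n ih =>
      intro R hRD hRB hRn p hp hps
      have hRne : R.Nonempty := (Set.ncard_pos (Set.toFinite R)).mp (by omega)
      obtain ⟨e, heR, w, hew, hwf⟩ := NS R hRD hRne hRB
      have heD := hRD heR
      have henp : e ∉ p := by
        intro h
        have : e ∈ insert x (D \ R) := by rw [← hps]; exact h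
        rcases Set.mem_insert_iff.mp this with h' | h'
        · exact hx (h' ▸ heD)
        · exact h'.2 heR
      have hfresh : ∀ u ∈ p, ¬ G.Adj u w := by
        intro u hu hadj
        exact hwf ⟨u, by rw [← hps]; exact hu, hadj⟩
      have hp' := legal_snoc hp henp hew hfresh
      refine ih (R \ {e}) (fun a ha => hRD ha.1) (fun a ha => hRB a ha.1)
        (by rw [Set.ncard_diff_singleton_of_mem heR]; omega)
        (p ++ [e]) hp' ?_
      have hiff : ∀ a, (a ∈ p ∨ a = e) ↔ (a = x ∨ (a ∈ D ∧ ¬(a ∈ R ∧ a ≠ e))) := by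
        intro a
        have hmem : a ∈ p ↔ (a = x ∨ (a ∈ D ∧ a ∉ R)) := by
          rw [show (a ∈ p) ↔ a ∈ {b | b ∈ p} from Iff.rfl, hps]
          simp [Set.mem_insert_iff]
        constructor
        · rintro (h | rfl)
          · rcases hmem.mp h with h | ⟨h1, h2⟩
            · exact Or.inl h
            · exact Or.inr ⟨h1, fun hh => h2 hh.1⟩
          · exact Or.inr ⟨heD, fun hh => hh.2 rfl⟩
        · rintro (h | ⟨h1, h2⟩)
          · exact Or.inl (hmem.mpr (Or.inl h))
          · by_cases he' : a = e
            · exact Or.inr he'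
            · exact Or.inl (hmem.mpr (Or.inr ⟨h1, fun hR => h2 ⟨hR, he'⟩⟩))
      ext a
      simp only [Set.mem_setOf_eq, List.mem_append, List.mem_singleton, Set.mem_insert_iff,
        Set.mem_diff, Set.mem_singleton_iff]
      exact hiff a
  have L2 : ∀ n, ∀ T : Set V, T ⊆ B → T.ncard = n →
      ∀ p : List V, LegalSeq G p → {a | a ∈ p} = insert x (B \ T) →
      ∃ q : List V, LegalSeq G q ∧ {a | a ∈ q} = insert x D := by
    intro n
    induction n with
    | zero =>
      intro T hTB hTn p hp hps
      have hTe : T = ∅ := (Set.ncard_eq_zero (Set.toFinite T)).mp hTn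
      subst hTe
      refine L1 (D \ B).ncard (D \ B) Set.diff_subset (fun a ha => ha.2) rfl p hp ?_
      rw [hps]
      congr 1
      ext a
      simp only [Set.diff_empty, Set.mem_diff]
      constructor
      · intro h
        exact ⟨hBD h, fun hh => hh.2 h⟩
      · rintro ⟨h1, h2⟩
        by_contra hB
        exact h2 ⟨h1, hB⟩
    | succ n ih =>
      intro T hTB hTn p hp hps
      have hTne : T.Nonempty := (Set.ncard_pos (Set.toFinite T)).mp (by omega)
      obtain ⟨e, heT, w, hew, hwf⟩ := FL T hTB hTne
      have heB := hTB heT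
      have henp : e ∉ p := by
        intro h
        have : e ∈ insert x (B \ T) := by rw [← hps]; exact h
        rcases Set.mem_insert_iff.mp this with h' | h'
        · exact hx (h' ▸ hBD heB)
        · exact h'.2 heT
      have hfresh : ∀ u ∈ p, ¬ G.Adj u w := by
        intro u hu hadj
        exact hwf ⟨u, by rw [← hps]; exact hu, hadj⟩
      have hp' := legal_snoc hp henp hew hfresh
      refine ih (T \ {e}) (fun a ha => hTB ha.1)
        (by rw [Set.ncard_diff_singleton_of_mem heT]; omega)
        (p ++ [e]) hp' ?_
      have hiff : ∀ a, (a ∈ p ∨ a = e) ↔ (a = x ∨ (a ∈ B ∧ ¬(a ∈ T ∧ a ≠ e))) := by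
        intro a
        have hmem : a ∈ p ↔ (a = x ∨ (a ∈ B ∧ a ∉ T)) := by
          rw [show (a ∈ p) ↔ a ∈ {b | b ∈ p} from Iff.rfl, hps]
          simp [Set.mem_insert_iff]
        constructor
        · rintro (h | rfl)
          · rcases hmem.mp h with h | ⟨h1, h2⟩
            · exact Or.inl h
            · exact Or.inr ⟨h1, fun hh => h2 hh.1⟩
          · exact Or.inr ⟨heB, fun hh => hh.2 rfl⟩
        · rintro (h | ⟨h1, h2⟩)
          · exact Or.inl (hmem.mpr (Or.inl h))
          · by_cases he' : a = e
            · exact Or.inr he'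
            · exact Or.inl (hmem.mpr (Or.inr ⟨h1, fun hT => h2 ⟨hT, he'⟩⟩))
      ext a
      simp only [Set.mem_setOf_eq, List.mem_append, List.mem_singleton, Set.mem_insert_iff,
        Set.mem_diff, Set.mem_singleton_iff]
      exact hiff a
  obtain ⟨q, hq, hqs⟩ := L2 B.ncard B subset_rfl rfl [x] (legal_singleton x) (by
    ext a
    simp)
  have hnd := hq.1
  have hlen : q.length = k + 1 := by
    have h1 : q.toFinset.card = q.length := List.toFinset_card_of_nodup hnd
    have h2 : (↑q.toFinset : Set V) = insert x D := by rw [List.coe_toFinset]; exact hqs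
    have h3 : (insert x D).ncard = k + 1 := by
      rw [Set.ncard_insert_of_notMem hx (Set.toFinite D), hDc]
    have h4 : (↑q.toFinset : Set V).ncard = q.toFinset.card := Set.ncard_coe_finset _
    rw [h2, h3] at h4
    omega
  have := legal_le hiso huni hq
  omega

lemma star_final [Finite V] {G : SimpleGraph V} (hiso : NoIsolatedVerts G)
    (hlc : ∀ v, IsLf G v ∨ IsCt G v)
    (hctr : ∀ c, IsCt G c → ∀ t, G.Adj c t → ∀ z, G.Adj t z ↔ z = c) :
    ∃ m : ℕ, totalDomNum G = 2 * m ∧ DisjUnionStars G m := by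
  classical
  obtain ⟨ι, hι⟩ := exists_injective_nat V
  set SC : Set V := {v | IsCt G v ∧ ∀ s, (∀ t, G.Adj v t ↔ t = s) → ι v < ι s} with hSCdef
  have noSCadj : ∀ u v, u ∈ SC → v ∈ SC → ¬ G.Adj u v := by
    intro u v hu hv hadj
    have h1 := hctr u hu.1 v hadj
    have h2 := hctr v hv.1 u hadj.symm
    have h3 := hu.2 v h2
    have h4 := hv.2 u h1
    omega
  have hscEx : ∀ v, ∃ c, c ∈ SC ∧ (v ∈ SC → c = v) ∧ (v ∉ SC → ∀ t, G.Adj v t ↔ t = c) := by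
    intro v
    by_cases hv : v ∈ SC
    · exact ⟨v, hv, fun _ => rfl, fun h => absurd hv h⟩
    · have hLf : ∃ s, (∀ t, G.Adj v t ↔ t = s) ∧ s ∈ SC := by
        by_cases hct : IsCt G v
        · have hnl : ¬ ∀ s, (∀ t, G.Adj v t ↔ t = s) → ι v < ι s := fun h => hv ⟨hct, h⟩
          push_neg at hnl
          obtain ⟨s, hs, hsι⟩ := hnl
          have hadjvs : G.Adj v s := (hs s).mpr rfl
          refine ⟨s, hs, ⟨v, hadjvs.symm, hs⟩, ?_⟩
          intro s' hs'
          have hv_eq : s' = v := ((hs' v).mp hadjvs.symm).symm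
          subst hv_eq
          have hne : ι s ≠ ι s' := fun h => (G.ne_of_adj hadjvs).symm (hι h)
          omega
        · rcases hlc v with ⟨s, hs⟩ | h
          · refine ⟨s, hs, ⟨v, ((hs s).mpr rfl).symm, hs⟩, ?_⟩
            intro s' hs'
            exfalso
            have hv_eq : s' = v := ((hs' v).mp ((hs s).mpr rfl).symm).symm
            exact hct ⟨s, (hs s).mpr rfl, hv_eq ▸ hs'⟩
          · exact absurd h hct
      obtain ⟨s, hs, hsSC⟩ := hLf
      exact ⟨s, hsSC, fun h => absurd h hv, fun _ => hs⟩
  choose sc hsc1 hsc2 hsc3 using hscEx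
  have adj_iff : ∀ u v, G.Adj u v ↔ (u ≠ v ∧ sc u = sc v ∧ (u = sc u ∨ v = sc v)) := by
    intro u v
    constructor
    · intro h
      have hne := G.ne_of_adj h
      by_cases hu : u ∈ SC <;> by_cases hv : v ∈ SC
      · exact absurd h (noSCadj u v hu hv)
      · have huu := hsc2 u hu
        have hvv : u = sc v := ((hsc3 v hv) u).mp h.symm
        exact ⟨hne, by rw [huu, ← hvv], Or.inl huu.symm⟩
      · have hvv := hsc2 v hv
        have huu : v = sc u := ((hsc3 u hu) v).mp h
        exact ⟨hne, by rw [hvv, ← huu], Or.inr hvv.symm⟩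
      · have h4 : v = sc u := ((hsc3 u hu) v).mp h
        exact absurd (h4 ▸ hsc1 u) hv
    · rintro ⟨hne, hsceq, hd | hd⟩
      · have hu : u ∈ SC := hd ▸ hsc1 u
        have hv : v ∉ SC := by
          intro hv
          exact hne (by rw [← hsc2 u hu, hsceq, hsc2 v hv])
        have : G.Adj v u := ((hsc3 v hv) u).mpr (by rw [← hsceq, ← hd])
        exact this.symm
      · have hv : v ∈ SC := hd ▸ hsc1 v
        have hu : u ∉ SC := by
          intro hu
          exact hne (by rw [← hsc2 u hu, hsceq, hsc2 v hv])
        exact ((hsc3 u hu) v).mpr (by rw [hsceq, ← hd])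
  have hpick : ∀ c, c ∈ SC → ∃ u, G.Adj c u ∧ ∀ t, G.Adj u t ↔ t = c := by
    intro c hc
    obtain ⟨u, hu1, hu2⟩ := hc.1
    exact ⟨u, hu1, hu2⟩
  choose! ℓ hℓ1 hℓ2 using hpick
  have hℓnotSC : ∀ c ∈ SC, ℓ c ∉ SC := fun c hc h => noSCadj c (ℓ c) hc h (hℓ1 c hc)
  have hℓinj : Set.InjOn ℓ SC := by
    intro c1 h1 c2 h2 he
    have ha1 : G.Adj (ℓ c1) c1 := (hℓ1 c1 h1).symm
    rw [he] at ha1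
    exact ((hℓ2 c2 h2) c1).mp ha1
  have hsc_of_leaf : ∀ c ∈ SC, sc (ℓ c) = c := by
    intro c hc
    have h3 := hsc3 (ℓ c) (hℓnotSC c hc)
    exact ((h3 c).mp (hℓ1 c hc).symm).symm
  have hfin : SC.Finite := Set.toFinite _
  set m := SC.ncard with hm
  haveI : Fintype ↥SC := hfin.fintype
  have hcard : Fintype.card ↥SC = m := by
    rw [hm, ← Nat.card_coe_set_eq, Nat.card_eq_fintype_card]
  let eqv : ↥SC ≃ Fin m := Fintype.equivFinOfCardEq hcard
  refine ⟨m, ?_, ?_⟩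
  · -- totalDomNum = 2 * m
    have hdisj : Disjoint SC (ℓ '' SC) := by
      rw [Set.disjoint_right]
      rintro a ⟨c, hc, rfl⟩
      exact hℓnotSC c hc
    have hLcard : (ℓ '' SC).ncard = m := Set.ncard_image_of_injOn hℓinj
    have hA0 : TotalDomSet G (SC ∪ ℓ '' SC) := by
      intro v
      by_cases hv : v ∈ SC
      · exact ⟨ℓ v, Or.inr ⟨v, hv, rfl⟩, hℓ1 v hv⟩
      · exact ⟨sc v, Or.inl (hsc1 v), ((hsc3 v hv) (sc v)).mpr rfl⟩
    have hU : (SC ∪ ℓ '' SC).ncard = 2 * m := by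
      rw [Set.ncard_union_eq hdisj (Set.toFinite _) (Set.toFinite _), hLcard]
      omega
    have hup : totalDomNum G ≤ 2 * m := by
      have h : sInf {n | ∃ A : Set V, TotalDomSet G A ∧ A.ncard = n} ≤ (SC ∪ ℓ '' SC).ncard :=
        Nat.sInf_le (show (SC ∪ ℓ '' SC).ncard ∈
          {n : ℕ | ∃ A : Set V, TotalDomSet G A ∧ A.ncard = n} from ⟨SC ∪ ℓ '' SC, hA0, rfl⟩)
      rw [hU] at h
      exact h
    have hlo : 2 * m ≤ totalDomNum G := by
      have h : 2 * m ≤ sInf {n | ∃ A : Set V, TotalDomSet G A ∧ A.ncard = n} := by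
        apply le_csInf ⟨(SC ∪ ℓ '' SC).ncard, show (SC ∪ ℓ '' SC).ncard ∈
          {n : ℕ | ∃ A : Set V, TotalDomSet G A ∧ A.ncard = n} from ⟨SC ∪ ℓ '' SC, hA0, rfl⟩⟩
        rintro n ⟨A, hA, rfl⟩
        have hSCA : SC ⊆ A := by
          intro c hc
          obtain ⟨a, haA, hadj⟩ := hA (ℓ c)
          have : a = c := ((hℓ2 c hc) a).mp hadj
          exact this ▸ haA
        choose! g hg1 hg2 using fun c (_ : c ∈ SC) => hA c
        have hgleaf : ∀ c ∈ SC, ∀ t, G.Adj (g c) t ↔ t = c := fun c hc =>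
          hctr c hc.1 (g c) (hg2 c hc)
        have hginj : Set.InjOn g SC := by
          intro c1 h1 c2 h2 he
          have := (hgleaf c1 h1 c1).mpr rfl
          rw [he] at this
          exact ((hgleaf c2 h2) c1).mp this
        have hgSC : ∀ c ∈ SC, g c ∉ SC := fun c hc h => noSCadj c (g c) hc h (hg2 c hc)
        have hdisj2 : Disjoint SC (g '' SC) := by
          rw [Set.disjoint_right]
          rintro a ⟨c, hc, rfl⟩
          exact hgSC c hc
        have hsub : SC ∪ g '' SC ⊆ A := by
          apply Set.union_subset hSCA
          rintro a ⟨c, hc, rfl⟩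
          exact hg1 c hc
        have h2m : (SC ∪ g '' SC).ncard = 2 * m := by
          rw [Set.ncard_union_eq hdisj2 (Set.toFinite _) (Set.toFinite _),
            Set.ncard_image_of_injOn hginj]
          omega
        calc 2 * m = (SC ∪ g '' SC).ncard := h2m.symm
          _ ≤ A.ncard := Set.ncard_le_ncard hsub (Set.toFinite A)
      exact h
    omega
  · refine ⟨fun v => eqv ⟨sc v, hsc1 v⟩, fun i => ↑(eqv.symm i), ?_, ?_, ?_⟩
    · intro i
      have hmem : (↑(eqv.symm i) : V) ∈ SC := (eqv.symm i).2
      have h1 : (⟨sc ↑(eqv.symm i), hsc1 _⟩ : ↥SC) = eqv.symm i :=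
        Subtype.ext (hsc2 _ hmem)
      exact (congrArg eqv h1).trans (Equiv.apply_symm_apply eqv i)
    · intro i
      have hc : (↑(eqv.symm i) : V) ∈ SC := (eqv.symm i).2
      refine ⟨ℓ ↑(eqv.symm i), ?_, ?_⟩
      · have h1 : (⟨sc (ℓ ↑(eqv.symm i)), hsc1 _⟩ : ↥SC) = eqv.symm i :=
          Subtype.ext (hsc_of_leaf _ hc)
        exact (congrArg eqv h1).trans (Equiv.apply_symm_apply eqv i)
      · exact G.ne_of_adj (hℓ1 _ hc).symm
    · intro u v
      rw [adj_iff u v]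
      have hcenter : ∀ w : V, (↑(eqv.symm (eqv ⟨sc w, hsc1 w⟩)) : V) = sc w := by
        intro w
        exact congrArg Subtype.val (Equiv.symm_apply_apply eqv ⟨sc w, hsc1 w⟩)
      constructor
      · rintro ⟨h1, h2, h3⟩
        refine ⟨h1, congrArg eqv (Subtype.ext h2), ?_⟩
        rcases h3 with h | h
        · exact Or.inl (h.trans (hcenter u).symm)
        · exact Or.inr (h.trans (hcenter v).symm)
      · rintro ⟨h1, h2, h3⟩
        have h2' : sc u = sc v := Subtype.ext_iff.mp (eqv.injective h2)
        refine ⟨h1, h2', ?_⟩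
        rcases h3 with h | h
        · exact Or.inl (h.trans (hcenter u))
        · exact Or.inr (h.trans (hcenter v))

lemma center_nbrs_leaf [Finite V] {G : SimpleGraph V} {k : ℕ} (hiso : NoIsolatedVerts G)
    (huni : TotalKUniform G k) {c : V} (hc : IsCt G c) {t : V} (ht : G.Adj c t) :
    ∀ z, G.Adj t z ↔ z = c := by
  obtain ⟨u0, hu0, hN⟩ := hc
  by_cases he : t = u0
  · subst he; exact hN
  · have hsub : ∀ z, G.Adj u0 z → G.Adj t z := by
      intro z hz
      have : z = c := (hN z).mp hz
      subst this
      exact ht.symm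
    have hall : ∀ z, G.Adj t z → G.Adj u0 z := by
      by_contra hcc
      push_neg at hcc
      obtain ⟨t0, h1, h2⟩ := hcc
      exact noNest hiso huni hsub h1 h2
    intro z
    constructor
    · intro hz
      exact (hN z).mp (hall z hz)
    · rintro rfl
      exact ht.symm

lemma leaf_or_center [Finite V] {G : SimpleGraph V} {k : ℕ} (hiso : NoIsolatedVerts G)
    (huni : TotalKUniform G k) (hk : totalDomNum G = k) (hg : ¬ G.egirth ≤ 6) :
    ∀ v, IsLf G v ∨ IsCt G v := by
  intro v
  by_cases hvl : IsLf G v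
  · exact Or.inl hvl
  right
  have hne : {n | ∃ A : Set V, TotalDomSet G A ∧ A.ncard = n}.Nonempty :=
    ⟨_, Set.univ, tds_univ hiso, rfl⟩
  obtain ⟨D, hD, hDc⟩ := Nat.sInf_mem hne
  have hDk : D.ncard = k := by rw [hDc]; exact hk
  have hml : ∀ x, x ∉ D → IsLf G x := fun x hx => ml hiso huni hg hD hDk hx
  have hvD : v ∈ D := by
    by_contra h
    exact hvl (hml v h)
  obtain ⟨w, hw, hwp⟩ := exists_priv huni hD hDk hvD
  by_cases hwl : IsLf G w
  · obtain ⟨s, hs⟩ := hwl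
    have hsv : s = v := ((hs v).mp hw.symm).symm
    exact ⟨w, hw, hsv ▸ hs⟩
  · exfalso
    have hsecond : ∃ u, G.Adj w u ∧ u ≠ v := by
      by_contra hcc
      push_neg at hcc
      exact hwl ⟨v, fun t => ⟨hcc t, fun h => h ▸ hw.symm⟩⟩
    obtain ⟨u, hu, huv⟩ := hsecond
    have huD : u ∉ D := fun h => hwp ⟨u, ⟨h, huv⟩, hu.symm⟩
    obtain ⟨s', hs'⟩ := hml u huD
    have hsw : s' = w := ((hs' w).mp hu.symm).symm
    have hctw : IsCt G w := ⟨u, hu, hsw ▸ hs'⟩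
    have := center_nbrs_leaf hiso huni hctw hw.symm
    exact hvl ⟨w, this⟩

end AuxSection

/-- Every total `k`-uniform graph is either the disjoint union of `k/2` stars or has girth at
most 6 (here `egirth = ⊤` for acyclic graphs). -/
theorem stmt_19 {V : Type*} [Finite V] (G : SimpleGraph V) (k : ℕ)
    (hiso : NoIsolatedVerts G) (huni : TotalKUniform G k) :
    (∃ m : ℕ, k = 2 * m ∧ DisjUnionStars G m) ∨ G.egirth ≤ 6 := by
  by_cases hg : G.egirth ≤ 6
  · exact Or.inr hg
  · left
    have hlc := leaf_or_center hiso huni huni.1 hg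
    have hctr : ∀ c, IsCt G c → ∀ t, G.Adj c t → ∀ z, G.Adj t z ↔ z = c :=
      fun c hc t ht => center_nbrs_leaf hiso huni hc ht
    obtain ⟨m, h1, h2⟩ := star_final hiso hlc hctr
    refine ⟨m, ?_, h2⟩
    rw [← huni.1]
    exact h1
end
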